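/- Lemma (positivity of the Reissner–Nordström d'Alembertian of Ω²r^{−α} for large α). For every Δ > 0 and every R₁ > r₊ there exists α̃ > 1 such that for all α ≥ α̃ and all r ≥ R₁: □(s ↦ Ω²(s)·s^{−α})(r) > Δ·r^{−α−2}, where □ denotes the radial d'Alembertian defined below. -/

import Mathlib

noncomputable section

open MeasureTheory Filter Topology
open scoped ENNReal

namespace RN

/-- `Ω²(r) = 1 − 2M/r + ρ²/r²`. -/
def Omega2 (M ρ r : ℝ) : ℝ := 1 - 2*M/r + ρ^2/r^2

/-- radius of the event horizon -/
def rPlus (M ρ : ℝ) : ℝ := M + Real.sqrt (M^2 - ρ^2)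

/-- radius of the Cauchy horizon -/
def rMinus (M ρ : ℝ) : ℝ := M - Real.sqrt (M^2 - ρ^2)

/-- `K(r)`, so that `2K(r) = (2/r²)(M − ρ²/r)`. -/
def Kf (M ρ r : ℝ) : ℝ := (M - ρ^2/r) / r^2

/-- tortoise coordinate `r*(r)` -/
def rStar (M ρ r : ℝ) : ℝ :=
  r + Real.log (r - rPlus M ρ) / (2 * Kf M ρ (rPlus M ρ))
    + Real.log (r - rMinus M ρ) / (2 * Kf M ρ (rMinus M ρ))

/-- partial derivative in the first null variable -/
def pdu {E : Type*} [NormedAddCommGroup E] [NormedSpace ℝ E]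
    (f : ℝ → ℝ → E) (u v : ℝ) : E := deriv (fun x => f x v) u

/-- partial derivative in the second null variable -/
def pdv {E : Type*} [NormedAddCommGroup E] [NormedSpace ℝ E]
    (f : ℝ → ℝ → E) (u v : ℝ) : E := deriv (fun x => f u x) v

/-- gauge derivative `D_u = ∂_u + i q₀ A_u` -/
def Dgu (q₀ : ℝ) (Au : ℝ → ℝ → ℝ) (f : ℝ → ℝ → ℂ) (u v : ℝ) : ℂ :=
  pdu f u v + Complex.I * (q₀ : ℂ) * (Au u v : ℂ) * f u v

/-- gauge derivative `D_v = ∂_v + i q₀ A_v` -/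
def Dgv (q₀ : ℝ) (Av : ℝ → ℝ → ℝ) (f : ℝ → ℝ → ℂ) (u v : ℝ) : ℂ :=
  pdv f u v + Complex.I * (q₀ : ℂ) * (Av u v : ℂ) * f u v

/-- A spherically symmetric solution of the Maxwell–charged-scalar-field system
on the Reissner–Nordström exterior, in null coordinates. -/
structure Solution (M ρ q₀ : ℝ) where
  φ : ℝ → ℝ → ℂ
  Q : ℝ → ℝ → ℝ
  Au : ℝ → ℝ → ℝ
  Av : ℝ → ℝ → ℝ
  /-- the area radius `r(u,v)` -/
  rf : ℝ → ℝ → ℝ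
  rf_gt : ∀ u v, rPlus M ρ < rf u v
  rf_star : ∀ u v, rStar M ρ (rf u v) = v - u
  φ_C2 : ContDiff ℝ 2 (fun p : ℝ × ℝ => φ p.1 p.2)
  Q_C2 : ContDiff ℝ 2 (fun p : ℝ × ℝ => Q p.1 p.2)
  Au_C2 : ContDiff ℝ 2 (fun p : ℝ × ℝ => Au p.1 p.2)
  Av_C2 : ContDiff ℝ 2 (fun p : ℝ × ℝ => Av p.1 p.2)
  wave : ∀ u v,
    Dgu q₀ Au (fun a b => Dgv q₀ Av (fun x y => (rf x y : ℂ) * φ x y) a b) u v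
      = ((Omega2 M ρ (rf u v) / rf u v : ℝ) : ℂ) * φ u v *
        (Complex.I * (q₀ : ℂ) * (Q u v : ℂ)
          - ((2*M/(rf u v) : ℝ) : ℂ) + ((2*ρ^2/(rf u v)^2 : ℝ) : ℂ))
  maxwell_u : ∀ u v,
    pdu Q u v = - q₀ * (rf u v)^2 * ((starRingEnd ℂ) (φ u v) * Dgu q₀ Au φ u v).im
  maxwell_v : ∀ u v,
    pdv Q u v = q₀ * (rf u v)^2 * ((starRingEnd ℂ) (φ u v) * Dgv q₀ Av φ u v).im
  potential : ∀ u v,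
    pdu Av u v - pdv Au u v = 2 * Q u v * Omega2 M ρ (rf u v) / (rf u v)^2

variable {M ρ q₀ : ℝ}

namespace Solution

/-- radiation field `ψ = rφ` -/
def ψ (S : Solution M ρ q₀) : ℝ → ℝ → ℂ := fun u v => (S.rf u v : ℂ) * S.φ u v

def Duφ (S : Solution M ρ q₀) : ℝ → ℝ → ℂ := Dgu q₀ S.Au S.φ
def Dvφ (S : Solution M ρ q₀) : ℝ → ℝ → ℂ := Dgv q₀ S.Av S.φ
def Duψ (S : Solution M ρ q₀) : ℝ → ℝ → ℂ := Dgu q₀ S.Au S.ψ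
def Dvψ (S : Solution M ρ q₀) : ℝ → ℝ → ℂ := Dgv q₀ S.Av S.ψ
def Dtφ (S : Solution M ρ q₀) : ℝ → ℝ → ℂ := fun u v => (S.Duφ u v + S.Dvφ u v) / 2
def Drφ (S : Solution M ρ q₀) : ℝ → ℝ → ℂ := fun u v => (S.Dvφ u v - S.Duφ u v) / 2

end Solution

def vR (M ρ R u : ℝ) : ℝ := u + rStar M ρ R
def uRc (M ρ R v : ℝ) : ℝ := v - rStar M ρ R
def u0 (M ρ R : ℝ) : ℝ := - rStar M ρ R / 2
def v0 (M ρ R : ℝ) : ℝ := rStar M ρ R / 2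

/-- the V-shaped foliation domain `D(u₁,u₂)` -/
def Dset (M ρ R u₁ u₂ : ℝ) : Set (ℝ × ℝ) :=
  {p : ℝ × ℝ | u₁ ≤ p.1 ∧ p.1 ≤ u₂ ∧ vR M ρ R p.1 ≤ p.2} ∪
  {p : ℝ × ℝ | vR M ρ R u₁ ≤ p.2 ∧ p.2 ≤ vR M ρ R u₂ ∧ uRc M ρ R p.2 ≤ p.1}

/-- `D(u₁,∞)` -/
def DsetInf (M ρ R u₁ : ℝ) : Set (ℝ × ℝ) := ⋃ u₂ ∈ Set.Ioi u₁, Dset M ρ R u₁ u₂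

namespace Solution

/-- the non-degenerate energy `E(u)` -/
def E (S : Solution M ρ q₀) (R u : ℝ) : ℝ≥0∞ :=
  (∫⁻ u' in Set.Ioi u, ENNReal.ofReal
    ((S.rf u' (vR M ρ R u))^2 * ‖S.Duφ u' (vR M ρ R u)‖^2 / Omega2 M ρ (S.rf u' (vR M ρ R u))))
  + ∫⁻ v in Set.Ioi (vR M ρ R u), ENNReal.ofReal ((S.rf u v)^2 * ‖S.Dvφ u v‖^2)

/-- the degenerate energy `E_deg(u)` -/
def Edeg (S : Solution M ρ q₀) (R u : ℝ) : ℝ≥0∞ :=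
  (∫⁻ u' in Set.Ioi u, ENNReal.ofReal ((S.rf u' (vR M ρ R u))^2 * ‖S.Duφ u' (vR M ρ R u)‖^2))
  + ∫⁻ v in Set.Ioi (vR M ρ R u), ENNReal.ofReal ((S.rf u v)^2 * ‖S.Dvφ u v‖^2)

/-- the `r^p`-weighted energy `E_p[ψ](u)` -/
def Ep (S : Solution M ρ q₀) (R p u : ℝ) : ℝ≥0∞ :=
  ∫⁻ v in Set.Ioi (vR M ρ R u), ENNReal.ofReal ((S.rf u v) ^ p * ‖S.Dvψ u v‖^2)

/-- `Ẽ_p(u) = E_p[ψ](u) + E(u)` -/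
def Etilde (S : Solution M ρ q₀) (R p u : ℝ) : ℝ≥0∞ := S.Ep R p u + S.E R u

/-- flux density along the event horizon: `liminf_{u→∞} (r²|D_vφ|²)(u,v)` -/
def hFlux (S : Solution M ρ q₀) (v : ℝ) : ℝ≥0∞ :=
  Filter.liminf (fun u => ENNReal.ofReal ((S.rf u v)^2 * ‖S.Dvφ u v‖^2)) Filter.atTop

/-- flux density along null infinity: `limsup_{v→∞} (r²|D_uφ|²)(u,v)` -/
def iFlux (S : Solution M ρ q₀) (u : ℝ) : ℝ≥0∞ :=
  Filter.limsup (fun v => ENNReal.ofReal ((S.rf u v)^2 * ‖S.Duφ u v‖^2)) Filter.atTop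

/-- `E_deg⁺(u₁,u₂)` -/
def EdegPlus (S : Solution M ρ q₀) (R u₁ u₂ : ℝ) : ℝ≥0∞ :=
  S.Edeg R u₁ + S.Edeg R u₂
  + (∫⁻ v in Set.Ioc (vR M ρ R u₁) (vR M ρ R u₂), S.hFlux v)
  + (∫⁻ u in Set.Ioc u₁ u₂, S.iFlux u)

/-- the initial energy `ℰ` on `Σ₀ = {t = 0}` -/
def calE (S : Solution M ρ q₀) : ℝ≥0∞ :=
  ∫⁻ x : ℝ, ENNReal.ofReal
    (((S.rf (-x/2) (x/2))^2 * ‖S.Duφ (-x/2) (x/2)‖^2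
      + (S.rf (-x/2) (x/2))^2 * ‖S.Dvφ (-x/2) (x/2)‖^2) / Omega2 M ρ (S.rf (-x/2) (x/2)))

/-- the initial `r^p`-weighted energy `ℰ_p` -/
def calEp (S : Solution M ρ q₀) (p : ℝ) : ℝ≥0∞ :=
  ∫⁻ x : ℝ, ENNReal.ofReal
    ((S.rf (-x/2) (x/2)) ^ p * ‖S.Dvψ (-x/2) (x/2)‖^2
      + (S.rf (-x/2) (x/2)) ^ p * ‖S.Duψ (-x/2) (x/2)‖^2
      + Omega2 M ρ (S.rf (-x/2) (x/2)) * (S.rf (-x/2) (x/2)) ^ p * ‖S.φ (-x/2) (x/2)‖^2)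

/-- `ℰ̃_p = ℰ_p + ℰ` -/
def calEtilde (S : Solution M ρ q₀) (p : ℝ) : ℝ≥0∞ := S.calEp p + S.calE

end Solution

/-- energy boundedness with constant `Cb` -/
def EnergyBound (S : Solution M ρ q₀) (R Cb : ℝ) : Prop :=
  S.E R (u0 M ρ R) < ⊤ ∧
    ∀ u₁ u₂ : ℝ, u0 M ρ R ≤ u₁ → u₁ ≤ u₂ → S.E R u₂ ≤ ENNReal.ofReal Cb * S.E R u₁

/-- the Morawetz (integrated local energy decay) estimate with constant `Cm` -/
def MorawetzBound (S : Solution M ρ q₀) (R Cm : ℝ) : Prop :=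
  ∀ u₁ u₂ : ℝ, u0 M ρ R ≤ u₁ → u₁ < u₂ →
    (∫⁻ p in Dset M ρ R u₁ u₂ ∩ {p : ℝ × ℝ | S.rf p.1 p.2 ≤ R},
        ENNReal.ofReal
          (((S.rf p.1 p.2)^2 * ‖S.Dvφ p.1 p.2‖^2
            + (S.rf p.1 p.2)^2 * ‖S.Duφ p.1 p.2‖^2 / (Omega2 M ρ (S.rf p.1 p.2))^2
            + ‖S.φ p.1 p.2‖^2) * Omega2 M ρ (S.rf p.1 p.2)))
      ≤ ENNReal.ofReal Cm * S.E R u₁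

/-- the scalar field vanishes at spatial infinity on the initial hypersurface -/
def InitialFieldVanishes (S : Solution M ρ q₀) : Prop :=
  Filter.Tendsto (fun x : ℝ => S.φ (-x/2) (x/2)) Filter.atTop (nhds (0:ℂ))

/-- `e₀` is the initial asymptotic charge -/
def InitialCharge (S : Solution M ρ q₀) (e₀ : ℝ) : Prop :=
  Filter.Tendsto (fun x : ℝ => S.Q (-x/2) (x/2)) Filter.atTop (nhds e₀)

/-- for each `u ≥ u₀(R)`, `φ(u,v) → 0` and `r|φ|²(u,v) → 0` as `v → ∞` -/
def FieldVanishes (S : Solution M ρ q₀) (R : ℝ) : Prop :=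
  ∀ u : ℝ, u0 M ρ R ≤ u →
    Filter.Tendsto (fun v => S.φ u v) Filter.atTop (nhds (0:ℂ)) ∧
    Filter.Tendsto (fun v => S.rf u v * ‖S.φ u v‖^2) Filter.atTop (nhds (0:ℝ))

/-- for each `u ≥ u₀(R)`, `φ(u,v) → 0` as `v → ∞` -/
def PhiVanishes (S : Solution M ρ q₀) (R : ℝ) : Prop :=
  ∀ u : ℝ, u0 M ρ R ≤ u → Filter.Tendsto (fun v => S.φ u v) Filter.atTop (nhds (0:ℂ))

/-- for each `u ≥ u₀(R)`, `sup_{v ≥ v_R(u)} |ψ(u,v)| < ∞` -/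
def PsiBounded (S : Solution M ρ q₀) (R : ℝ) : Prop :=
  ∀ u : ℝ, u0 M ρ R ≤ u → ∃ B : ℝ, ∀ v : ℝ, vR M ρ R u ≤ v → ‖S.ψ u v‖ ≤ B

/-- `|Q| < δ` on `D(u₀(R),∞)` -/
def ChargeBelow (S : Solution M ρ q₀) (R δ : ℝ) : Prop :=
  ∀ p ∈ DsetInf M ρ R (u0 M ρ R), |S.Q p.1 p.2| < δ

/-- `|Q − e| < δ` on `D(u₀(R),∞)` -/
def ChargeNear (S : Solution M ρ q₀) (R e δ : ℝ) : Prop :=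
  ∀ p ∈ DsetInf M ρ R (u0 M ρ R), |S.Q p.1 p.2 - e| < δ

/-- the radial d'Alembertian on the Reissner–Nordström exterior -/
def Box (M ρ : ℝ) (f : ℝ → ℝ) (r : ℝ) : ℝ :=
  Omega2 M ρ r * deriv (deriv f) r
    + (deriv (fun s => Omega2 M ρ s) r + 2 * Omega2 M ρ r / r) * deriv f r

end RN

open RN

section Aux

private lemma aux_hasDerivF (M ρ α : ℝ) {s : ℝ} (hs : 0 < s) :
    HasDerivAt (fun t : ℝ => t ^ (-α) - 2*M*t^(-α-1) + ρ^2*t^(-α-2))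
      ((-α) * s^(-α-1) - 2*M*((-α-1)*s^(-α-2)) + ρ^2*((-α-2)*s^(-α-3))) s := by
  have h1 : HasDerivAt (fun t : ℝ => t ^ (-α)) ((-α) * s ^ (-α-1)) s := by
    simpa using Real.hasDerivAt_rpow_const (x := s) (p := -α) (Or.inl hs.ne')
  have h2 : HasDerivAt (fun t : ℝ => t ^ (-α-1)) ((-α-1) * s ^ (-α-2)) s := by
    have := Real.hasDerivAt_rpow_const (x := s) (p := -α-1) (Or.inl hs.ne')
    convert this using 2; ring
  have h3 : HasDerivAt (fun t : ℝ => t ^ (-α-2)) ((-α-2) * s ^ (-α-3)) s := by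
    have := Real.hasDerivAt_rpow_const (x := s) (p := -α-2) (Or.inl hs.ne')
    convert this using 2; ring
  exact (h1.sub (h2.const_mul (2*M))).add (h3.const_mul (ρ^2))

private lemma aux_hasDerivF1 (M ρ α : ℝ) {s : ℝ} (hs : 0 < s) :
    HasDerivAt (fun t : ℝ => (-α) * t^(-α-1) - 2*M*((-α-1)*t^(-α-2)) + ρ^2*((-α-2)*t^(-α-3)))
      ((-α)*((-α-1) * s^(-α-2)) - 2*M*((-α-1)*((-α-2)*s^(-α-3)))
        + ρ^2*((-α-2)*((-α-3)*s^(-α-4)))) s := by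
  have h2 : HasDerivAt (fun t : ℝ => t ^ (-α-1)) ((-α-1) * s ^ (-α-2)) s := by
    have := Real.hasDerivAt_rpow_const (x := s) (p := -α-1) (Or.inl hs.ne')
    convert this using 2; ring
  have h3 : HasDerivAt (fun t : ℝ => t ^ (-α-2)) ((-α-2) * s ^ (-α-3)) s := by
    have := Real.hasDerivAt_rpow_const (x := s) (p := -α-2) (Or.inl hs.ne')
    convert this using 2; ring
  have h4 : HasDerivAt (fun t : ℝ => t ^ (-α-3)) ((-α-3) * s ^ (-α-4)) s := by
    have := Real.hasDerivAt_rpow_const (x := s) (p := -α-3) (Or.inl hs.ne')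
    convert this using 2; ring
  have := ((h2.const_mul (-α)).sub ((h3.const_mul (-α-1)).const_mul (2*M))).add
    ((h4.const_mul (-α-2)).const_mul (ρ^2))
  exact this

private lemma aux_hasDerivOmega2 (M ρ : ℝ) {s : ℝ} (hs : 0 < s) :
    HasDerivAt (fun t : ℝ => Omega2 M ρ t) (2*M/s^2 - 2*ρ^2/s^3) s := by
  have h1 : HasDerivAt (fun t : ℝ => 2*M/t)
      ((0 * s - 2*M*1)/s^2) s :=
    (hasDerivAt_const s (2*M)).div (hasDerivAt_id s) hs.ne'
  have hp : HasDerivAt (fun t : ℝ => t^2) (2*s) s := by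
    simpa using hasDerivAt_pow 2 s
  have h2 : HasDerivAt (fun t : ℝ => ρ^2/t^2)
      ((0 * s^2 - ρ^2*(2*s))/(s^2)^2) s :=
    (hasDerivAt_const s (ρ^2)).div hp (by positivity)
  have := ((hasDerivAt_const s (1:ℝ)).sub h1).add h2
  refine this.congr_deriv ?_
  field_simp
  ring

private lemma aux_fun_eq (M ρ α : ℝ) {s : ℝ} (hs : 0 < s) :
    Omega2 M ρ s * s ^ (-α) = s ^ (-α) - 2*M*s^(-α-1) + ρ^2*s^(-α-2) := by
  have e1 : s ^ (-α-1) = s ^ (-α) / s := by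
    rw [show (-α-1 : ℝ) = -α - 1 from rfl, Real.rpow_sub hs, Real.rpow_one]
  have e2 : s ^ (-α-2) = s ^ (-α) / s^2 := by
    rw [show (-α-2 : ℝ) = -α - 2 from rfl, Real.rpow_sub hs,
      show (2:ℝ) = ((2:ℕ):ℝ) by norm_num, Real.rpow_natCast]
  rw [e1, e2, Omega2]
  field_simp

end Aux


set_option maxHeartbeats 2000000 in
/-- positivity of the Reissner–Nordström d'Alembertian of Ω²r^{−α}
for large α. -/
theorem statement9 (M ρ : ℝ) (hM : 0 < M) (hρ : |ρ| < M) :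
    ∀ Δ : ℝ, 0 < Δ → ∀ R₁ : ℝ, rPlus M ρ < R₁ →
      ∃ αt : ℝ, 1 < αt ∧ ∀ α : ℝ, αt ≤ α → ∀ r : ℝ, R₁ ≤ r →
        Δ * r ^ (-α - 2) < Box M ρ (fun s => Omega2 M ρ s * s ^ (-α)) r := by
  intro Δ hΔ R₁ hR₁
  have hρ2 : ρ^2 < M^2 := by nlinarith [sq_abs ρ, abs_nonneg ρ]
  have hsq : Real.sqrt (M^2 - ρ^2) ^ 2 = M^2 - ρ^2 :=
    Real.sq_sqrt (by nlinarith)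
  have hsqnn : (0:ℝ) ≤ Real.sqrt (M^2 - ρ^2) := Real.sqrt_nonneg _
  have hMR : M < R₁ := by
    have h : M ≤ rPlus M ρ := by unfold rPlus; linarith
    linarith
  have hR0 : (0:ℝ) < R₁ := lt_trans hM hMR
  have hOmR : 0 < Omega2 M ρ R₁ := by
    have h2 : Real.sqrt (M^2 - ρ^2) < R₁ - M := by unfold rPlus at hR₁; linarith
    have h : 0 < R₁^2 - 2*M*R₁ + ρ^2 := by nlinarith
    have e : Omega2 M ρ R₁ = (R₁^2 - 2*M*R₁ + ρ^2)/R₁^2 := by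
      unfold Omega2; field_simp
    rw [e]; positivity
  set c := Omega2 M ρ R₁ ^ 2 with hc
  set B := 1 + 2*M/R₁ + 14*M*ρ^2/R₁^3 with hB
  set B' := 12*M*ρ^2/R₁^3 with hB'
  have hcpos : 0 < c := by positivity
  have hB1 : (1:ℝ) ≤ B := by
    have : (0:ℝ) ≤ 2*M/R₁ := by positivity
    have : (0:ℝ) ≤ 14*M*ρ^2/R₁^3 := by positivity
    rw [hB]; linarith
  have hB'nn : (0:ℝ) ≤ B' := by rw [hB']; positivity
  refine ⟨max 2 ((Δ + 2*B + B')/c), lt_of_lt_of_le one_lt_two (le_max_left _ _), ?_⟩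
  intro α hα r hr
  have hα2 : (2:ℝ) ≤ α := le_trans (le_max_left _ _) hα
  have hαc : Δ + 2*B + B' ≤ α * c := by
    have h := le_trans (le_max_right 2 ((Δ + 2*B + B')/c)) hα
    rw [div_le_iff₀ hcpos] at h; linarith
  have hr0 : (0:ℝ) < r := lt_of_lt_of_le hR0 hr
  set f : ℝ → ℝ := fun s => Omega2 M ρ s * s ^ (-α) with hf
  have hderiv1 : ∀ s : ℝ, 0 < s → deriv f s =
      (-α) * s^(-α-1) - 2*M*((-α-1)*s^(-α-2)) + ρ^2*((-α-2)*s^(-α-3)) := by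
    intro s hs
    have hev : f =ᶠ[nhds s] (fun t => t ^ (-α) - 2*M*t^(-α-1) + ρ^2*t^(-α-2)) := by
      filter_upwards [isOpen_Ioi.mem_nhds (show s ∈ Set.Ioi (0:ℝ) from hs)] with t ht
      exact aux_fun_eq M ρ α ht
    rw [hev.deriv_eq, (aux_hasDerivF M ρ α hs).deriv]
  have hderiv2 : deriv (deriv f) r =
      (-α)*((-α-1) * r^(-α-2)) - 2*M*((-α-1)*((-α-2)*r^(-α-3)))
        + ρ^2*((-α-2)*((-α-3)*r^(-α-4))) := by
    have hev : deriv f =ᶠ[nhds r]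
        (fun t => (-α) * t^(-α-1) - 2*M*((-α-1)*t^(-α-2)) + ρ^2*((-α-2)*t^(-α-3))) := by
      filter_upwards [isOpen_Ioi.mem_nhds (show r ∈ Set.Ioi (0:ℝ) from hr0)] with t ht
      exact hderiv1 t ht
    rw [hev.deriv_eq, (aux_hasDerivF1 M ρ α hr0).deriv]
  have hderivOm : deriv (fun s => Omega2 M ρ s) r = 2*M/r^2 - 2*ρ^2/r^3 :=
    (aux_hasDerivOmega2 M ρ hr0).deriv
  set X := r ^ (-α - 2) with hX
  have hXpos : 0 < X := Real.rpow_pos_of_pos hr0 _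
  have e1 : r ^ (-α-1) = X * r := by
    rw [hX, show (-α-1 : ℝ) = (-α - 2) + 1 by ring, Real.rpow_add hr0, Real.rpow_one]
  have e3 : r ^ (-α-3) = X / r := by
    rw [hX, show (-α-3 : ℝ) = (-α - 2) - 1 by ring, Real.rpow_sub hr0, Real.rpow_one]
  have e4 : r ^ (-α-4) = X / r^2 := by
    rw [hX, show (-α-4 : ℝ) = (-α - 2) - 2 by ring, Real.rpow_sub hr0,
      show (2:ℝ) = ((2:ℕ):ℝ) by norm_num, Real.rpow_natCast]
  have hBox : Box M ρ f r = X *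
      (α^2 * (Omega2 M ρ r)^2
        + α * (-1 - 2*M/r + (4*ρ^2+8*M^2)/r^2 - 14*M*ρ^2/r^3 + 5*ρ^4/r^4)
        + ((2*ρ^2+4*M^2)/r^2 - 12*M*ρ^2/r^3 + 6*ρ^4/r^4)) := by
    rw [Box, hderiv2, hderivOm, hderiv1 r hr0, e1, e3, e4, ← hX]
    unfold Omega2
    field_simp
    ring
  rw [hBox]
  rw [mul_comm Δ X]
  refine mul_lt_mul_of_pos_left ?_ hXpos
  -- component bounds
  have hOmMono : Omega2 M ρ R₁ ≤ Omega2 M ρ r := by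
    have hd : Omega2 M ρ r - Omega2 M ρ R₁ =
        ((r - R₁) * (2*M*r*R₁ - ρ^2*(r+R₁))) / (r^2 * R₁^2) := by
      unfold Omega2; field_simp; ring
    have hnum : 0 ≤ (r - R₁) * (2*M*r*R₁ - ρ^2*(r+R₁)) := by
      apply mul_nonneg (by linarith)
      have ha : ρ^2*(r+R₁) ≤ M^2*(r+R₁) := by
        have := mul_nonneg (show (0:ℝ) ≤ M^2 - ρ^2 by linarith)
          (show (0:ℝ) ≤ r + R₁ by linarith)
        linarith [this]
      have hb : M^2*(r+R₁) ≤ 2*M*r*R₁ := by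
        have h1 : (0:ℝ) ≤ M*r*(R₁-M) :=
          mul_nonneg (mul_nonneg hM.le hr0.le) (by linarith)
        have h2 : (0:ℝ) ≤ M*R₁*(r-M) :=
          mul_nonneg (mul_nonneg hM.le hR0.le) (by linarith)
        linarith [h1, h2]
      linarith
    have : 0 ≤ Omega2 M ρ r - Omega2 M ρ R₁ := by
      rw [hd]; positivity
    linarith
  have h1 : α^2 * c ≤ α^2 * (Omega2 M ρ r)^2 := by
    apply mul_le_mul_of_nonneg_left _ (sq_nonneg α)
    rw [hc]; exact pow_le_pow_left₀ hOmR.le hOmMono 2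
  have l1 : 2*M/r ≤ 2*M/R₁ :=
    div_le_div_of_nonneg_left (by positivity) hR0 hr
  have l2 : 14*M*ρ^2/r^3 ≤ 14*M*ρ^2/R₁^3 :=
    div_le_div_of_nonneg_left (by positivity) (by positivity)
      (pow_le_pow_left₀ hR0.le hr 3)
  have l3 : (0:ℝ) ≤ (4*ρ^2+8*M^2)/r^2 := by positivity
  have l4 : (0:ℝ) ≤ 5*ρ^4/r^4 := by positivity
  have hL : -B ≤ -1 - 2*M/r + (4*ρ^2+8*M^2)/r^2 - 14*M*ρ^2/r^3 + 5*ρ^4/r^4 := by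
    rw [hB]; linarith
  have l5 : 12*M*ρ^2/r^3 ≤ 12*M*ρ^2/R₁^3 :=
    div_le_div_of_nonneg_left (by positivity) (by positivity)
      (pow_le_pow_left₀ hR0.le hr 3)
  have l6 : (0:ℝ) ≤ (2*ρ^2+4*M^2)/r^2 := by positivity
  have l7 : (0:ℝ) ≤ 6*ρ^4/r^4 := by positivity
  have hC : -B' ≤ (2*ρ^2+4*M^2)/r^2 - 12*M*ρ^2/r^3 + 6*ρ^4/r^4 := by
    rw [hB']; linarith
  have hαL : -(α*B) ≤ α * (-1 - 2*M/r + (4*ρ^2+8*M^2)/r^2 - 14*M*ρ^2/r^3 + 5*ρ^4/r^4) := by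
    have := mul_le_mul_of_nonneg_left hL (show (0:ℝ) ≤ α by linarith)
    linarith [this]
  have key : α * (Δ + 2*B + B') ≤ α * (α * c) :=
    mul_le_mul_of_nonneg_left hαc (by linarith)
  clear_value X c B B' f
  have p1 : 2*Δ ≤ α*Δ := mul_le_mul_of_nonneg_right hα2 hΔ.le
  have p2 : 2*B ≤ α*B := mul_le_mul_of_nonneg_right hα2 (by linarith)
  have p3 : 2*B' ≤ α*B' := mul_le_mul_of_nonneg_right hα2 hB'nn
  linarith [h1, hαL, hC, key, p1, p2, p3, hΔ, hB1, hB'nn]
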